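/- For integers a, b, c ≥ 2: ζ(c,b,a) = ζ(a,b,c) − ζ(a,b)ζ(c) + ζ(a,b+c) + ζ(a)(−ζ(b,c) + ζ(b)ζ(c) − ζ(b+c)) + ζ(a+b,c) − ζ(a+b)ζ(c) + ζ(a+b+c). -/
import Mathlib

noncomputable def zeta1 (k : ℕ) : ℝ := ∑' n : ℕ+, 1 / (n : ℝ) ^ k

noncomputable def zeta2 (a b : ℕ) : ℝ :=
  ∑' p : {p : ℕ × ℕ // p.2 < p.1 ∧ 0 < p.2},
    1 / ((p.val.1 : ℝ) ^ a * (p.val.2 : ℝ) ^ b)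

noncomputable def zeta3 (a b c : ℕ) : ℝ :=
  ∑' t : {t : ℕ × ℕ × ℕ // t.2.1 < t.1 ∧ t.2.2 < t.2.1 ∧ 0 < t.2.2},
    1 / ((t.val.1 : ℝ) ^ a * (t.val.2.1 : ℝ) ^ b * (t.val.2.2 : ℝ) ^ c)

open Set ENNReal

namespace Rev

noncomputable def F1 (k n : ℕ) : ℝ≥0∞ := ENNReal.ofReal (1 / (n : ℝ) ^ k)
noncomputable def F2 (a b : ℕ) (p : ℕ × ℕ) : ℝ≥0∞ :=
  ENNReal.ofReal (1 / ((p.1 : ℝ) ^ a * (p.2 : ℝ) ^ b))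
noncomputable def F3 (a b c : ℕ) (t : ℕ × ℕ × ℕ) : ℝ≥0∞ :=
  ENNReal.ofReal (1 / ((t.1 : ℝ) ^ a * (t.2.1 : ℝ) ^ b * (t.2.2 : ℝ) ^ c))

def S2 : Set (ℕ × ℕ) := {p | p.2 < p.1 ∧ 0 < p.2}
def S3 : Set (ℕ × ℕ × ℕ) := {t | t.2.1 < t.1 ∧ t.2.2 < t.2.1 ∧ 0 < t.2.2}

noncomputable def Z1 (k : ℕ) : ℝ≥0∞ := ∑' n : ℕ, F1 k n
noncomputable def Z2 (a b : ℕ) : ℝ≥0∞ := ∑' p : ℕ × ℕ, S2.indicator (F2 a b) p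
noncomputable def Z3 (a b c : ℕ) : ℝ≥0∞ := ∑' t : ℕ × ℕ × ℕ, S3.indicator (F3 a b c) t

lemma F1F1 (x y n m : ℕ) : F1 x n * F1 y m = F2 x y (n, m) := by
  rw [F1, F1, F2, ← ENNReal.ofReal_mul (by positivity)]
  rw [div_mul_div_comm, one_mul]

lemma mul1 {x y : ℕ} (hx : 1 ≤ x) (hy : 1 ≤ y) :
    Z1 x * Z1 y = Z2 x y + Z2 y x + Z1 (x + y) := by
  have hprod : Z1 x * Z1 y = ∑' p : ℕ × ℕ, F2 x y p := by
    rw [Z1, Z1, ← ENNReal.tsum_mul_right,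
      show (∑' p : ℕ × ℕ, F2 x y p) = ∑' a : ℕ, ∑' b : ℕ, F1 x a * F1 y b from by
        rw [← ENNReal.tsum_prod]; exact tsum_congr fun p => (F1F1 x y p.1 p.2).symm]
    exact tsum_congr fun n => ENNReal.tsum_mul_left.symm
  have hpt : ∀ p : ℕ × ℕ, F2 x y p =
      S2.indicator (F2 x y) p + S2.indicator (F2 y x) p.swap
        + {q : ℕ × ℕ | q.1 = q.2}.indicator (F2 x y) p := by
    rintro ⟨n, m⟩
    simp only [Set.indicator_apply, Set.mem_setOf_eq, S2, Prod.swap_prod_mk]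
    split_ifs with h1 h2 h3 h2 h3 h3 h3 <;> try (exfalso; omega)
    · simp
    · rw [zero_add, add_zero, F2, F2]
      congr 1
      push_cast
      ring
    · simp
    · have : n = 0 ∨ m = 0 := by omega
      rcases this with h | h <;> subst h <;>
        simp [F2, zero_pow (show x ≠ 0 by omega), zero_pow (show y ≠ 0 by omega)]
  have hswap : (∑' p : ℕ × ℕ, S2.indicator (F2 y x) p.swap) = Z2 y x :=
    (Equiv.prodComm ℕ ℕ).tsum_eq (S2.indicator (F2 y x))
  have hdiag : (∑' p : ℕ × ℕ, {q : ℕ × ℕ | q.1 = q.2}.indicator (F2 x y) p) = Z1 (x + y) := by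
    have hinj : Function.Injective (fun n : ℕ => ((n, n) : ℕ × ℕ)) := by
      intro p q h
      exact (Prod.ext_iff.mp h).1
    have hsupp : Function.support ({q : ℕ × ℕ | q.1 = q.2}.indicator (F2 x y))
        ⊆ Set.range (fun n : ℕ => ((n, n) : ℕ × ℕ)) := by
      intro p hp
      rcases p with ⟨n, m⟩
      by_cases h : n = m
      · exact ⟨n, by simp [h]⟩
      · exact absurd (Set.indicator_of_notMem (by simpa using h) _) hp
    rw [← hinj.tsum_eq hsupp, Z1]
    refine tsum_congr fun n => ?_
    rw [Set.indicator_of_mem (by simp), F2, F1]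
    congr 1
    rw [pow_add]
  rw [hprod, tsum_congr hpt, ENNReal.tsum_add, ENNReal.tsum_add, hswap, hdiag]
  rfl



def A : Set (ℕ × ℕ × ℕ) := {t | t.2.1 < t.1 ∧ 0 < t.2.1 ∧ 0 < t.2.2}
def A2' : Set (ℕ × ℕ × ℕ) := {t | t.2.1 < t.1 ∧ t.2.2 = t.2.1 ∧ 0 < t.2.2}
def A3' : Set (ℕ × ℕ × ℕ) := {t | t.2.2 < t.1 ∧ t.2.1 < t.2.2 ∧ 0 < t.2.1}
def A4' : Set (ℕ × ℕ × ℕ) := {t | t.2.2 = t.1 ∧ t.2.1 < t.1 ∧ 0 < t.2.1}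
def A5' : Set (ℕ × ℕ × ℕ) := {t | t.1 < t.2.2 ∧ t.2.1 < t.1 ∧ 0 < t.2.1}

lemma F2F1 (x y z n m k : ℕ) : F2 x y (n, m) * F1 z k = F3 x y z (n, m, k) := by
  rw [F2, F1, F3, ← ENNReal.ofReal_mul (by positivity), div_mul_div_comm, one_mul]

lemma mul2 {x y z : ℕ} (hx : 1 ≤ x) (hy : 1 ≤ y) (hz : 1 ≤ z) :
    Z2 x y * Z1 z = Z3 x y z + Z3 x z y + Z3 z x y + Z2 x (y + z) + Z2 (x + z) y := by
  have hpoint : ∀ (p : ℕ × ℕ) (k : ℕ),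
      S2.indicator (F2 x y) p * F1 z k = A.indicator (F3 x y z) (p.1, p.2, k) := by
    rintro ⟨n, m⟩ k
    simp only [Set.indicator_apply, Set.mem_setOf_eq, S2, A]
    split_ifs with h1 h2 h2
    · exact F2F1 x y z n m k
    · have hk : k = 0 := by omega
      subst hk
      simp [F1, zero_pow (show z ≠ 0 by omega)]
    · exfalso; omega
    · simp
  have hprod : Z2 x y * Z1 z = ∑' t : ℕ × ℕ × ℕ, A.indicator (F3 x y z) t := by
    calc Z2 x y * Z1 z = ∑' p : ℕ × ℕ, ∑' k : ℕ, S2.indicator (F2 x y) p * F1 z k := by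
          rw [Z2, Z1, ← ENNReal.tsum_mul_right]
          exact tsum_congr fun p => ENNReal.tsum_mul_left.symm
      _ = ∑' p : ℕ × ℕ, ∑' k : ℕ, A.indicator (F3 x y z) (p.1, p.2, k) :=
          tsum_congr fun p => tsum_congr fun k => hpoint p k
      _ = ∑' u : (ℕ × ℕ) × ℕ, A.indicator (F3 x y z) (u.1.1, u.1.2, u.2) :=
          (ENNReal.tsum_prod (f := fun (p : ℕ × ℕ) (k : ℕ) =>
            A.indicator (F3 x y z) (p.1, p.2, k))).symm
      _ = ∑' t : ℕ × ℕ × ℕ, A.indicator (F3 x y z) t :=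
          (Equiv.prodAssoc ℕ ℕ ℕ).tsum_eq (A.indicator (F3 x y z))
  have hsplit : ∀ t : ℕ × ℕ × ℕ, A.indicator (F3 x y z) t =
      S3.indicator (F3 x y z) t + A3'.indicator (F3 x y z) t + A5'.indicator (F3 x y z) t
        + A2'.indicator (F3 x y z) t + A4'.indicator (F3 x y z) t := by
    rintro ⟨n, m, k⟩
    simp only [Set.indicator_apply, Set.mem_setOf_eq, A, S3, A2', A3', A4', A5']
    split_ifs <;> first | (exfalso; omega) | simp
  have e3 : (∑' t : ℕ × ℕ × ℕ, A3'.indicator (F3 x y z) t) = Z3 x z y := by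
    rw [← ((Equiv.refl ℕ).prodCongr (Equiv.prodComm ℕ ℕ)).tsum_eq (A3'.indicator (F3 x y z)), Z3]
    refine tsum_congr fun t => ?_
    rcases t with ⟨n, m, k⟩
    show A3'.indicator (F3 x y z) (n, k, m) = S3.indicator (F3 x z y) (n, m, k)
    simp only [Set.indicator_apply, Set.mem_setOf_eq, A3', S3]
    split_ifs <;> first | (exfalso; omega) | rfl | (rw [F3, F3]; congr 1; ring)
  have e5 : (∑' t : ℕ × ℕ × ℕ, A5'.indicator (F3 x y z) t) = Z3 z x y := by
    rw [← (⟨fun t => (t.2.1, t.2.2, t.1), fun t => (t.2.2, t.1, t.2.1), fun t => rfl,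
        fun t => rfl⟩ : (ℕ × ℕ × ℕ) ≃ (ℕ × ℕ × ℕ)).tsum_eq (A5'.indicator (F3 x y z)), Z3]
    refine tsum_congr fun t => ?_
    rcases t with ⟨n, m, k⟩
    show A5'.indicator (F3 x y z) (m, k, n) = S3.indicator (F3 z x y) (n, m, k)
    simp only [Set.indicator_apply, Set.mem_setOf_eq, A5', S3]
    split_ifs <;> first | (exfalso; omega) | rfl | (rw [F3, F3]; congr 1; ring)
  have e2 : (∑' t : ℕ × ℕ × ℕ, A2'.indicator (F3 x y z) t) = Z2 x (y + z) := by
    have hinj : Function.Injective (fun p : ℕ × ℕ => ((p.1, p.2, p.2) : ℕ × ℕ × ℕ)) := by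
      intro p q h
      have h1 := Prod.ext_iff.mp h
      exact Prod.ext h1.1 (Prod.ext_iff.mp h1.2).1
    have hsupp : Function.support (A2'.indicator (F3 x y z))
        ⊆ Set.range (fun p : ℕ × ℕ => ((p.1, p.2, p.2) : ℕ × ℕ × ℕ)) := by
      rintro ⟨n, m, k⟩ hp
      by_cases h : m = k
      · exact ⟨(n, m), by simp [h]⟩
      · refine absurd (Set.indicator_of_notMem ?_ _) hp
        simp only [A2', Set.mem_setOf_eq]
        omega
    rw [← hinj.tsum_eq hsupp, Z2]
    refine tsum_congr fun p => ?_
    rcases p with ⟨n, m⟩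
    show A2'.indicator (F3 x y z) (n, m, m) = S2.indicator (F2 x (y + z)) (n, m)
    simp only [Set.indicator_apply, Set.mem_setOf_eq, A2', S2, true_and, and_true, eq_self_iff_true]
    split_ifs <;> first | (exfalso; omega) | rfl | (rw [F3, F2]; congr 1; rw [pow_add]; ring)
  have e4 : (∑' t : ℕ × ℕ × ℕ, A4'.indicator (F3 x y z) t) = Z2 (x + z) y := by
    have hinj : Function.Injective (fun p : ℕ × ℕ => ((p.1, p.2, p.1) : ℕ × ℕ × ℕ)) := by
      intro p q h
      have h1 := Prod.ext_iff.mp h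
      exact Prod.ext h1.1 (Prod.ext_iff.mp h1.2).1
    have hsupp : Function.support (A4'.indicator (F3 x y z))
        ⊆ Set.range (fun p : ℕ × ℕ => ((p.1, p.2, p.1) : ℕ × ℕ × ℕ)) := by
      rintro ⟨n, m, k⟩ hp
      by_cases h : n = k
      · exact ⟨(n, m), by simp [h]⟩
      · refine absurd (Set.indicator_of_notMem ?_ _) hp
        simp only [A4', Set.mem_setOf_eq]
        omega
    rw [← hinj.tsum_eq hsupp, Z2]
    refine tsum_congr fun p => ?_
    rcases p with ⟨n, m⟩
    show A4'.indicator (F3 x y z) (n, m, n) = S2.indicator (F2 (x + z) y) (n, m)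
    simp only [Set.indicator_apply, Set.mem_setOf_eq, A4', S2, true_and, and_true, eq_self_iff_true]
    split_ifs <;> first | (exfalso; omega) | rfl | (rw [F3, F2]; congr 1; rw [pow_add]; ring)
  rw [hprod, tsum_congr hsplit, ENNReal.tsum_add, ENNReal.tsum_add, ENNReal.tsum_add,
    ENNReal.tsum_add, e3, e5, e2, e4]
  rfl



lemma zeta1_eq {k : ℕ} (hk : 1 ≤ k) : zeta1 k = (Z1 k).toReal := by
  rw [Z1]
  simp only [F1]
  rw [ENNReal.tsum_toReal_eq (fun n => ofReal_ne_top),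
    show (fun n : ℕ => (ENNReal.ofReal (1 / (n : ℝ) ^ k)).toReal) = fun n : ℕ => 1 / (n : ℝ) ^ k
      from funext fun n => by rw [ENNReal.toReal_ofReal (by positivity)]]
  rw [zeta1]
  have hinj : Function.Injective (fun n : ℕ+ => (n : ℕ)) := fun p q h => PNat.coe_injective h
  have hsupp : Function.support (fun n : ℕ => 1 / (n : ℝ) ^ k)
      ⊆ Set.range (fun n : ℕ+ => (n : ℕ)) := by
    intro n hn
    rcases Nat.eq_zero_or_pos n with h | h
    · subst h
      simp [Function.mem_support, zero_pow (show k ≠ 0 by omega)] at hn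
    · exact ⟨⟨n, h⟩, rfl⟩
  rw [← hinj.tsum_eq hsupp]

lemma zeta2_eq (a b : ℕ) : zeta2 a b = (Z2 a b).toReal := by
  rw [Z2, ENNReal.tsum_toReal_eq (fun p => ?_), show (fun p : ℕ × ℕ =>
      (S2.indicator (F2 a b) p).toReal)
      = S2.indicator (fun p : ℕ × ℕ => 1 / ((p.1 : ℝ) ^ a * (p.2 : ℝ) ^ b)) from
      funext fun p => ?_, ← tsum_subtype]
  · rfl
  · by_cases hp : p ∈ S2
    · rw [Set.indicator_of_mem hp, Set.indicator_of_mem hp, F2,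
        ENNReal.toReal_ofReal (by positivity)]
    · rw [Set.indicator_of_notMem hp, Set.indicator_of_notMem hp, ENNReal.toReal_zero]
  · by_cases hp : p ∈ S2
    · rw [Set.indicator_of_mem hp]; exact ofReal_ne_top
    · rw [Set.indicator_of_notMem hp]; exact ENNReal.zero_ne_top

lemma zeta3_eq (a b c : ℕ) : zeta3 a b c = (Z3 a b c).toReal := by
  rw [Z3, ENNReal.tsum_toReal_eq (fun t => ?_), show (fun t : ℕ × ℕ × ℕ =>
      (S3.indicator (F3 a b c) t).toReal)
      = S3.indicator (fun t : ℕ × ℕ × ℕ =>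
          1 / ((t.1 : ℝ) ^ a * (t.2.1 : ℝ) ^ b * (t.2.2 : ℝ) ^ c)) from
      funext fun t => ?_, ← tsum_subtype]
  · rfl
  · by_cases ht : t ∈ S3
    · rw [Set.indicator_of_mem ht, Set.indicator_of_mem ht, F3,
        ENNReal.toReal_ofReal (by positivity)]
    · rw [Set.indicator_of_notMem ht, Set.indicator_of_notMem ht, ENNReal.toReal_zero]
  · by_cases ht : t ∈ S3
    · rw [Set.indicator_of_mem ht]; exact ofReal_ne_top
    · rw [Set.indicator_of_notMem ht]; exact ENNReal.zero_ne_top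

lemma Z1_ne_top {k : ℕ} (hk : 2 ≤ k) : Z1 k ≠ ⊤ := by
  have hs : Summable (fun n : ℕ => 1 / (n : ℝ) ^ k) :=
    Real.summable_one_div_nat_pow.mpr (by omega)
  rw [Z1]
  simp only [F1]
  rw [← ENNReal.ofReal_tsum_of_nonneg (fun n => by positivity) hs]
  exact ofReal_ne_top

lemma Z2_ne_top {x y : ℕ} (hx : 2 ≤ x) (hy : 2 ≤ y) : Z2 x y ≠ ⊤ := by
  have hle : Z2 x y ≤ Z1 x * Z1 y := by
    rw [mul1 (show 1 ≤ x by omega) (show 1 ≤ y by omega)]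
    exact le_self_add.trans le_self_add
  exact ne_top_of_le_ne_top (ENNReal.mul_ne_top (Z1_ne_top hx) (Z1_ne_top hy)) hle

lemma Z3_ne_top {x y z : ℕ} (hx : 2 ≤ x) (hy : 2 ≤ y) (hz : 2 ≤ z) : Z3 x y z ≠ ⊤ := by
  have hle : Z3 x y z ≤ Z2 x y * Z1 z := by
    rw [mul2 (show 1 ≤ x by omega) (show 1 ≤ y by omega) (show 1 ≤ z by omega)]
    exact ((le_self_add.trans le_self_add).trans le_self_add).trans le_self_add
  exact ne_top_of_le_ne_top (ENNReal.mul_ne_top (Z2_ne_top hx hy) (Z1_ne_top hz)) hle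

lemma toReal_add5 {p q r s t : ℝ≥0∞} (hp : p ≠ ⊤) (hq : q ≠ ⊤) (hr : r ≠ ⊤) (hs : s ≠ ⊤)
    (ht : t ≠ ⊤) :
    (p + q + r + s + t).toReal = p.toReal + q.toReal + r.toReal + s.toReal + t.toReal := by
  rw [ENNReal.toReal_add (by simp [ENNReal.add_ne_top, hp, hq, hr, hs]) ht,
    ENNReal.toReal_add (by simp [ENNReal.add_ne_top, hp, hq, hr]) hs,
    ENNReal.toReal_add (by simp [ENNReal.add_ne_top, hp, hq]) hr,
    ENNReal.toReal_add hp hq]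

end Rev

theorem reversion_identity (a b c : ℕ) (ha : 2 ≤ a) (hb : 2 ≤ b) (hc : 2 ≤ c) :
    zeta3 c b a =
      zeta3 a b c - zeta2 a b * zeta1 c + zeta2 a (b + c)
        + zeta1 a * (-zeta2 b c + zeta1 b * zeta1 c - zeta1 (b + c))
        + zeta2 (a + b) c - zeta1 (a + b) * zeta1 c + zeta1 (a + b + c) := by
  open Rev in
  have h5 := Rev.mul1 (x := a) (y := b) (by omega) (by omega)
  have h1 := Rev.mul2 (x := a) (y := b) (z := c) (by omega) (by omega) (by omega)
  have h6 := Rev.mul2 (x := b) (y := a) (z := c) (by omega) (by omega) (by omega)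
  have h2' := Rev.mul2 (x := b) (y := c) (z := a) (by omega) (by omega) (by omega)
  rw [show c + a = a + c from by omega, show b + a = a + b from by omega] at h2'
  have h3 := Rev.mul1 (x := a) (y := b + c) (by omega) (by omega)
  rw [show a + (b + c) = a + b + c from by omega] at h3
  have h4 := Rev.mul1 (x := a + b) (y := c) (by omega) (by omega)
  have hE : Rev.Z3 c b a + Rev.Z2 a b * Rev.Z1 c + Rev.Z1 a * Rev.Z2 b c
        + Rev.Z1 a * Rev.Z1 (b + c) + Rev.Z1 (a + b) * Rev.Z1 c
      = Rev.Z3 a b c + Rev.Z2 a (b + c) + Rev.Z1 a * Rev.Z1 b * Rev.Z1 c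
        + Rev.Z2 (a + b) c + Rev.Z1 (a + b + c) := by
    rw [h5, add_mul, add_mul, mul_comm (Rev.Z1 a) (Rev.Z2 b c), h1, h6, h2', h3, h4]
    ring
  have key := congrArg ENNReal.toReal hE
  have n3cba := Rev.Z3_ne_top hc hb ha
  have n3abc := Rev.Z3_ne_top ha hb hc
  have n1a := Rev.Z1_ne_top ha
  have n1b := Rev.Z1_ne_top hb
  have n1c := Rev.Z1_ne_top hc
  have n1bc := Rev.Z1_ne_top (show 2 ≤ b + c by omega)
  have n1ab := Rev.Z1_ne_top (show 2 ≤ a + b by omega)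
  have n1abc := Rev.Z1_ne_top (show 2 ≤ a + b + c by omega)
  have n2ab := Rev.Z2_ne_top ha hb
  have n2bc := Rev.Z2_ne_top hb hc
  have n2abc := Rev.Z2_ne_top ha (show 2 ≤ b + c by omega)
  have n2ab_c := Rev.Z2_ne_top (show 2 ≤ a + b by omega) hc
  rw [Rev.toReal_add5 n3cba (ENNReal.mul_ne_top n2ab n1c) (ENNReal.mul_ne_top n1a n2bc)
      (ENNReal.mul_ne_top n1a n1bc) (ENNReal.mul_ne_top n1ab n1c),
    Rev.toReal_add5 n3abc n2abc (ENNReal.mul_ne_top (ENNReal.mul_ne_top n1a n1b) n1c)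
      n2ab_c n1abc] at key
  simp only [ENNReal.toReal_mul] at key
  rw [← Rev.zeta3_eq, ← Rev.zeta3_eq, ← Rev.zeta2_eq, ← Rev.zeta2_eq, ← Rev.zeta2_eq,
    ← Rev.zeta2_eq, ← Rev.zeta1_eq (show 1 ≤ a by omega), ← Rev.zeta1_eq (show 1 ≤ b by omega),
    ← Rev.zeta1_eq (show 1 ≤ c by omega), ← Rev.zeta1_eq (show 1 ≤ b + c by omega),
    ← Rev.zeta1_eq (show 1 ≤ a + b by omega),
    ← Rev.zeta1_eq (show 1 ≤ a + b + c by omega)] at key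
  linear_combination key
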